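/- arXiv:1004.2467 — 7 statements merged into one kernel-verified Lean document; each statement's English description precedes it below -/
import Mathlib

section
/- Let K be a field, p a positive integer, and A ∈ M_p(K) a matrix such that A + P is invertible for every invertible P ∈ M_p(K). Then A = 0. -/
open Matrix Module

lemma aux_equiv {K : Type*} [Field K] {p : ℕ} {v w : Fin p → K}
    (hv : v ≠ 0) (hw : w ≠ 0) :
    ∃ f : (Fin p → K) ≃ₗ[K] (Fin p → K), f v = w := by
  classical
  have hvi : LinearIndepOn K id ({v} : Set (Fin p → K)) :=
    (linearIndepOn_singleton_iff K).mpr hv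
  have hwi : LinearIndepOn K id ({w} : Set (Fin p → K)) :=
    (linearIndepOn_singleton_iff K).mpr hw
  let bv := Basis.extend hvi
  let bw := Basis.extend hwi
  haveI := FiniteDimensional.fintypeBasisIndex bv
  haveI := FiniteDimensional.fintypeBasisIndex bw
  have hcard : Fintype.card (hvi.extend (Set.subset_univ _)) =
      Fintype.card (hwi.extend (Set.subset_univ _)) := by
    have h1 := Module.finrank_eq_card_basis bv
    have h2 := Module.finrank_eq_card_basis bw
    omega
  have hvmem : v ∈ hvi.extend (Set.subset_univ _) :=
    hvi.subset_extend _ rfl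
  have hwmem : w ∈ hwi.extend (Set.subset_univ _) :=
    hwi.subset_extend _ rfl
  let e0 := Fintype.equivOfCardEq hcard
  let e := e0.trans (Equiv.swap (e0 ⟨v, hvmem⟩) ⟨w, hwmem⟩)
  refine ⟨bv.equiv bw e, ?_⟩
  have : bv ⟨v, hvmem⟩ = v := Basis.extend_apply_self hvi _
  have h1 : (bv.equiv bw e) v = (bv.equiv bw e) (bv ⟨v, hvmem⟩) := by rw [this]
  rw [h1, Basis.equiv_apply]
  have : e ⟨v, hvmem⟩ = ⟨w, hwmem⟩ := by
    simp [e, Equiv.swap_apply_left]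
  rw [this]
  exact Basis.extend_apply_self hwi _

theorem stmt_0 {K : Type*} [Field K] {p : ℕ} (hp : 0 < p)
    (A : Matrix (Fin p) (Fin p) K)
    (h : ∀ P : Matrix (Fin p) (Fin p) K, IsUnit P → IsUnit (A + P)) :
    A = 0 := by
  by_contra hA
  -- find v with A *ᵥ v ≠ 0
  have hex : ∃ v : Fin p → K, A *ᵥ v ≠ 0 := by
    by_contra hc
    push_neg at hc
    apply hA
    ext i j
    have := congrFun (hc (Pi.single j 1)) i
    simpa [mulVec_single] using this
  obtain ⟨v, hv⟩ := hex
  have hv0 : v ≠ 0 := by rintro rfl; simp at hv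
  obtain ⟨f, hf⟩ := aux_equiv hv0 (neg_ne_zero.mpr hv)
  set P := LinearMap.toMatrix' (f : (Fin p → K) →ₗ[K] (Fin p → K)) with hP
  have hPu : IsUnit P := by
    refine isUnit_iff_exists.mpr ⟨LinearMap.toMatrix' (f.symm : (Fin p → K) →ₗ[K] (Fin p → K)), ?_, ?_⟩
    · rw [hP, ← LinearMap.toMatrix'_comp]
      simp
    · rw [hP, ← LinearMap.toMatrix'_comp]
      simp
  have hAP := h P hPu
  have hinj : Function.Injective ((A + P).mulVec) :=
    mulVec_injective_iff_isUnit.mpr hAP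
  have : (A + P) *ᵥ v = (A + P) *ᵥ 0 := by
    rw [add_mulVec, mulVec_zero]
    have : P *ᵥ v = -(A *ᵥ v) := by
      rw [hP, ← Matrix.toLin'_apply, Matrix.toLin'_toMatrix']
      exact hf
    rw [this, add_neg_cancel]
  exact hv0 (hinj this)
end

section
/- Let K be a field, n a positive integer, and D a line in K^n. Every matrix in M_D := {M ∈ M_n(K) : D ⊆ ker M} is singular, and M_D is maximal among linear subspaces of M_n(K) consisting entirely of singular matrices. -/
/-- The space of `n × n` matrices annihilating a given subspace `D ⊆ Kⁿ`. -/
def annihilatorSpace (K : Type*) [Field K] (n : ℕ)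
    (D : Submodule K (Fin n → K)) : Submodule K (Matrix (Fin n) (Fin n) K) where
  carrier := {M | ∀ x ∈ D, M.mulVec x = 0}
  add_mem' := by
    intro a b ha hb x hx
    simp [Matrix.add_mulVec, ha x hx, hb x hx]
  zero_mem' := by
    intro x hx
    simp [Matrix.zero_mulVec]
  smul_mem' := by
    intro c a ha x hx
    simp [Matrix.smul_mulVec, ha x hx]


open Matrix

/-- A vecMulVec matrix acts on a vector as a rank-one map. -/
lemma vecMulVec_mulVec' {K : Type*} [Field K] {n : ℕ} (u f x : Fin n → K) :
    (Matrix.vecMulVec u f) *ᵥ x = (f ⬝ᵥ x) • u := by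
  ext i
  simp [Matrix.mulVec, Matrix.vecMulVec_apply, dotProduct, Finset.mul_sum,
    mul_comm, mul_assoc, mul_left_comm]

/-- Given two nonzero vectors there is a functional nonvanishing on both. -/
lemma exists_dot_ne_zero {K : Type*} [Field K] {n : ℕ} {v w : Fin n → K}
    (hv : v ≠ 0) (hw : w ≠ 0) : ∃ f : Fin n → K, f ⬝ᵥ v ≠ 0 ∧ f ⬝ᵥ w ≠ 0 := by
  obtain ⟨i, hi⟩ := Function.ne_iff.mp hv
  obtain ⟨j, hj⟩ := Function.ne_iff.mp hw
  simp only [Pi.zero_apply] at hi hj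
  by_cases hwi : w i ≠ 0
  · exact ⟨Pi.single i 1, by simpa [single_dotProduct] using hi,
      by simpa [single_dotProduct] using hwi⟩
  by_cases hvj : v j ≠ 0
  · exact ⟨Pi.single j 1, by simpa [single_dotProduct] using hvj,
      by simpa [single_dotProduct] using hj⟩
  push_neg at hwi hvj
  refine ⟨Pi.single i 1 + Pi.single j 1, ?_, ?_⟩ <;>
    simp [add_dotProduct, single_dotProduct, hwi, hvj, hi, hj]

/-- Transitivity: an invertible matrix sending any nonzero vector to any nonzero vector. -/
lemma exists_isUnit_mulVec_eq {K : Type*} [Field K] {n : ℕ} {v w : Fin n → K}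
    (hv : v ≠ 0) (hw : w ≠ 0) :
    ∃ B : Matrix (Fin n) (Fin n) K, IsUnit B ∧ B *ᵥ v = w := by
  obtain ⟨f, ha, hb⟩ := exists_dot_ne_zero hv hw
  set a := f ⬝ᵥ v with haa
  set B : Matrix (Fin n) (Fin n) K := 1 + Matrix.vecMulVec (a⁻¹ • (w - v)) f with hB
  have hmul : ∀ x, B *ᵥ x = x + (f ⬝ᵥ x) • a⁻¹ • (w - v) := by
    intro x
    rw [hB, Matrix.add_mulVec, Matrix.one_mulVec, vecMulVec_mulVec']
  refine ⟨B, ?_, ?_⟩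
  · rw [← Matrix.mulVec_injective_iff_isUnit]
    intro x y hxy
    have hz : B *ᵥ (x - y) = 0 := by rw [Matrix.mulVec_sub, hxy, sub_self]
    rw [hmul] at hz
    set z := x - y
    have hfz : f ⬝ᵥ z = 0 := by
      have := congrArg (fun u => f ⬝ᵥ u) hz
      simp only [dotProduct_add, dotProduct_smul, dotProduct_sub,
        dotProduct_zero, smul_eq_mul] at this
      have h2 : f ⬝ᵥ z * (a⁻¹ * (f ⬝ᵥ w)) = 0 := by
        field_simp at this ⊢
        linear_combination this
      rcases mul_eq_zero.mp h2 with h | h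
      · exact h
      · exact absurd h (by simp [mul_eq_zero, ha, hb, inv_eq_zero])
    have : z = 0 := by rw [hfz, zero_smul, add_zero] at hz; exact hz
    exact sub_eq_zero.mp this
  · rw [hmul, ← haa, smul_smul, mul_inv_cancel₀ ha, one_smul, add_sub_cancel]
theorem stmt_2 {K : Type*} [Field K] {n : ℕ} (hn : 0 < n)
    (D : Submodule K (Fin n → K)) (hD : Module.finrank K D = 1) :
    (∀ M ∈ annihilatorSpace K n D, ¬ IsUnit M) ∧
    (∀ W : Submodule K (Matrix (Fin n) (Fin n) K),
      annihilatorSpace K n D ≤ W → (∀ M ∈ W, ¬ IsUnit M) →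
      W = annihilatorSpace K n D) := by
  obtain ⟨v, hv0, hvspan⟩ := finrank_eq_one_iff'.mp hD
  have hv : (v : Fin n → K) ≠ 0 := fun h => hv0 (Subtype.ext h)
  constructor
  · intro M hM hMunit
    have h0 : M *ᵥ (v : Fin n → K) = 0 := hM v v.2
    have := (Matrix.mulVec_injective_iff_isUnit.mpr hMunit)
    exact hv (this (by simpa using h0))
  · intro W hWle hWsing
    refine le_antisymm (fun A hA => ?_) hWle
    -- show A annihilates D
    intro x hx
    obtain ⟨c, hc⟩ := hvspan ⟨x, hx⟩
    have hcx : c • (v : Fin n → K) = x := congrArg Subtype.val hc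
    -- first, A *ᵥ v = 0
    have hAv : A *ᵥ (v : Fin n → K) = 0 := by
      by_contra hne
      obtain ⟨B, hBu, hBv⟩ := exists_isUnit_mulVec_eq hv hne
      have hBA : B - A ∈ annihilatorSpace K n D := by
        intro y hy
        obtain ⟨d, hd⟩ := hvspan ⟨y, hy⟩
        have hdy : d • (v : Fin n → K) = y := congrArg Subtype.val hd
        rw [← hdy, Matrix.sub_mulVec, Matrix.mulVec_smul, Matrix.mulVec_smul, hBv, sub_self]
      have hBW : B ∈ W := by
        have := W.add_mem (hWle hBA) hA
        simpa using this
      exact hWsing B hBW hBu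
    rw [← hcx, Matrix.mulVec_smul, hAv, smul_zero]
end

section
/- Let K be a field and n ≥ 2. Two linear hyperplanes H₁ and H₂ of M_n(K) are equivalent (i.e. H₂ = P H₁ Q for some invertible P, Q ∈ GL_n(K)) if and only if the nonzero matrices in their orthogonal complements (with respect to the trace form tr(AB)) have the same rank. Consequently, there are exactly n equivalence classes of linear hyperplanes of M_n(K). -/
/-- Two subspaces of matrices are equivalent if one is obtained from the other
by multiplying on the left and on the right by fixed invertible matrices. -/
def MatEquiv {K : Type*} [Field K] {n : ℕ}
    (H₁ H₂ : Submodule K (Matrix (Fin n) (Fin n) K)) : Prop :=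
  ∃ P Q : Matrix (Fin n) (Fin n) K, IsUnit P ∧ IsUnit Q ∧
    (H₂ : Set (Matrix (Fin n) (Fin n) K)) = (fun M => P * M * Q) '' H₁

/-- The orthogonal complement of a set of matrices with respect to the trace form. -/
def traceOrth {K : Type*} [Field K] {n : ℕ}
    (H : Submodule K (Matrix (Fin n) (Fin n) K)) : Set (Matrix (Fin n) (Fin n) K) :=
  {A | ∀ M ∈ H, (A * M).trace = 0}

open Module LinearMap Submodule

section Aux

variable {K : Type*} [Field K] {n : ℕ}

/-- Any endomorphism of `K^n` of rank `r` admits adapted bases. -/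
lemma exists_adapted_bases (f : (Fin n → K) →ₗ[K] (Fin n → K)) (r : ℕ)
    (hr : finrank K (LinearMap.range f) = r) :
    ∃ v w : Basis (Fin r ⊕ Fin (n - r)) K (Fin n → K),
      (∀ i, f (v (Sum.inl i)) = w (Sum.inl i)) ∧ ∀ j, f (v (Sum.inr j)) = 0 := by
  classical
  have hV : finrank K (Fin n → K) = n := Module.finrank_fin_fun K
  have hrn : r ≤ n := by
    have := (LinearMap.range f).finrank_le
    rw [hV, hr] at this; exact this
  have hrk : finrank K (LinearMap.range f) + finrank K (LinearMap.ker f) = n := by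
    rw [f.finrank_range_add_finrank_ker, hV]
  have hker : finrank K (LinearMap.ker f) = n - r := by omega
  obtain ⟨C, hC⟩ := Submodule.exists_isCompl (LinearMap.ker f)
  have hCdim : finrank K C = r := by
    have := Submodule.finrank_add_eq_of_isCompl hC
    rw [hV] at this; omega
  obtain ⟨D, hD⟩ := Submodule.exists_isCompl (LinearMap.range f)
  have hDdim : finrank K D = n - r := by
    have := Submodule.finrank_add_eq_of_isCompl hD
    rw [hV] at this; omega
  let ρ : C ≃ₗ[K] LinearMap.range f :=
    (Submodule.quotientEquivOfIsCompl (LinearMap.ker f) C hC).symm.trans f.quotKerEquivRange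
  have hρ : ∀ c : C, (ρ c : Fin n → K) = f c := by
    intro c
    simp [ρ, Submodule.quotientEquivOfIsCompl_symm_apply,
      LinearMap.quotKerEquivRange_apply_mk]
  let bC : Basis (Fin r) K C := Module.finBasisOfFinrankEq K C hCdim
  let bK : Basis (Fin (n - r)) K (LinearMap.ker f) :=
    Module.finBasisOfFinrankEq K _ hker
  let bD : Basis (Fin (n - r)) K D := Module.finBasisOfFinrankEq K D hDdim
  let v : Basis (Fin r ⊕ Fin (n - r)) K (Fin n → K) :=
    (bC.prod bK).map (Submodule.prodEquivOfIsCompl C (LinearMap.ker f) hC.symm)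
  let w : Basis (Fin r ⊕ Fin (n - r)) K (Fin n → K) :=
    (bC.map ρ |>.prod bD).map (Submodule.prodEquivOfIsCompl (LinearMap.range f) D hD)
  refine ⟨v, w, fun i => ?_, fun j => ?_⟩
  · have hv : v (Sum.inl i) = (bC i : Fin n → K) := by
      simp [v, Basis.map_apply, Submodule.coe_prodEquivOfIsCompl']
    have hw : w (Sum.inl i) = (ρ (bC i) : Fin n → K) := by
      simp [w, Basis.map_apply, Submodule.coe_prodEquivOfIsCompl']
    rw [hv, hw, hρ]
  · have hv : v (Sum.inr j) = (bK j : Fin n → K) := by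
      simp [v, Basis.map_apply, Submodule.coe_prodEquivOfIsCompl']
    rw [hv]
    exact (LinearMap.mem_ker).1 (bK j).2

lemma mulVecLin_toMatrix' (A : Matrix (Fin n) (Fin n) K) :
    LinearMap.toMatrixAlgEquiv' A.mulVecLin = A := by
  have h : Matrix.toLinAlgEquiv' A = A.mulVecLin := by
    refine LinearMap.ext fun v => ?_
    rw [Matrix.toLinAlgEquiv'_apply]; rfl
  rw [← h, LinearMap.toMatrixAlgEquiv'_toLinAlgEquiv']

/-- Two square matrices over a field with equal rank are equivalent. -/
lemma exists_units_of_rank_eq {A B : Matrix (Fin n) (Fin n) K} (h : A.rank = B.rank) :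
    ∃ P Q : Matrix (Fin n) (Fin n) K, IsUnit P ∧ IsUnit Q ∧ B = P * A * Q := by
  classical
  obtain ⟨v, w, hvw, hv0⟩ := exists_adapted_bases A.mulVecLin A.rank rfl
  obtain ⟨v', w', hvw', hv0'⟩ := exists_adapted_bases B.mulVecLin A.rank (by rw [h]; rfl)
  let e₁ : (Fin n → K) ≃ₗ[K] (Fin n → K) := v'.equiv v (Equiv.refl _)
  let e₂ : (Fin n → K) ≃ₗ[K] (Fin n → K) := w.equiv w' (Equiv.refl _)
  have key : B.mulVecLin = e₂.toLinearMap ∘ₗ A.mulVecLin ∘ₗ e₁.toLinearMap := by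
    apply v'.ext
    rintro (i | j)
    · simp only [LinearMap.comp_apply, LinearEquiv.coe_coe, e₁, e₂, Basis.equiv_apply,
        Equiv.refl_apply, hvw, hvw']
    · simp only [LinearMap.comp_apply, LinearEquiv.coe_coe, e₁, e₂, Basis.equiv_apply,
        Equiv.refl_apply, hv0, hv0', map_zero]
  refine ⟨LinearMap.toMatrixAlgEquiv' e₂.toLinearMap,
      LinearMap.toMatrixAlgEquiv' e₁.toLinearMap, ?_, ?_, ?_⟩
  · exact (isUnit_iff_exists.2 ⟨e₂.symm.toLinearMap, by ext x; simp, by ext x; simp⟩).map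
      LinearMap.toMatrixAlgEquiv'
  · exact (isUnit_iff_exists.2 ⟨e₁.symm.toLinearMap, by ext x; simp, by ext x; simp⟩).map
      LinearMap.toMatrixAlgEquiv'
  · have h2 := congrArg LinearMap.toMatrixAlgEquiv' key
    rw [mulVecLin_toMatrix'] at h2
    rw [h2]
    have h3 : e₂.toLinearMap ∘ₗ A.mulVecLin ∘ₗ e₁.toLinearMap
        = e₂.toLinearMap * A.mulVecLin * e₁.toLinearMap := rfl
    rw [h3, map_mul, map_mul, mulVecLin_toMatrix']

/-- The trace pairing as a linear map into the dual. -/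
noncomputable def tracePairing (n : ℕ) (K : Type*) [Field K] :
    Matrix (Fin n) (Fin n) K →ₗ[K] Module.Dual K (Matrix (Fin n) (Fin n) K) where
  toFun A :=
    { toFun := fun M => (A * M).trace
      map_add' := fun M N => by simp [Matrix.mul_add]
      map_smul' := fun c M => by simp [Matrix.mul_smul] }
  map_add' A B := by ext M; simp [Matrix.add_mul]
  map_smul' c A := by ext M; simp [Matrix.smul_mul]

@[simp] lemma tracePairing_apply (A M : Matrix (Fin n) (Fin n) K) :
    tracePairing n K A M = (A * M).trace := rfl

lemma tracePairing_ne_zero {A : Matrix (Fin n) (Fin n) K} (hA : A ≠ 0) :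
    tracePairing n K A ≠ 0 := by
  classical
  obtain ⟨i, j, hij⟩ : ∃ i j, A i j ≠ 0 := by
    by_contra hcon
    push_neg at hcon
    exact hA (by ext i j; simp [hcon i j])
  intro h0
  have h := congrFun (congrArg DFunLike.coe h0) (Matrix.single j i (1 : K))
  simp only [tracePairing_apply, LinearMap.zero_apply] at h
  apply hij
  rw [← h]
  simp [Matrix.trace, Matrix.mul_apply, Matrix.single, Matrix.diag, ite_and,
    Finset.sum_ite_eq, Finset.sum_ite_eq']

lemma tracePairing_injective : Function.Injective (tracePairing n K) := by
  rw [← LinearMap.ker_eq_bot, LinearMap.ker_eq_bot']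
  intro A hA
  by_contra h
  exact tracePairing_ne_zero h hA

lemma finrank_matrix' : finrank K (Matrix (Fin n) (Fin n) K) = n ^ 2 := by
  rw [Module.finrank_matrix, Fintype.card_fin, finrank_self, mul_one, sq]

lemma tracePairing_surjective : Function.Surjective (tracePairing n K) :=
  (LinearMap.injective_iff_surjective_of_finrank_eq_finrank
    (Subspace.dual_finrank_eq).symm).1 tracePairing_injective

lemma mem_traceOrth_iff {H : Submodule K (Matrix (Fin n) (Fin n) K)}
    {A : Matrix (Fin n) (Fin n) K} :
    A ∈ traceOrth H ↔ H ≤ LinearMap.ker (tracePairing n K A) := by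
  constructor
  · intro h M hM; exact h M hM
  · intro h M hM; exact h hM

lemma finrank_ker_tracePairing {A : Matrix (Fin n) (Fin n) K} (hA : A ≠ 0) :
    finrank K (LinearMap.ker (tracePairing n K A)) = n ^ 2 - 1 := by
  have h1 : finrank K (LinearMap.range (tracePairing n K A)) = 1 := by
    have hne : LinearMap.range (tracePairing n K A) ≠ ⊥ := by
      rw [ne_eq, LinearMap.range_eq_bot]
      exact tracePairing_ne_zero hA
    have hle : finrank K (LinearMap.range (tracePairing n K A)) ≤ 1 := by
      simpa using (LinearMap.range (tracePairing n K A)).finrank_le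
    have hge : 1 ≤ finrank K (LinearMap.range (tracePairing n K A)) := by
      rw [Nat.one_le_iff_ne_zero]
      intro h0
      exact hne (Submodule.finrank_eq_zero.1 h0)
    omega
  have h2 := (tracePairing n K A).finrank_range_add_finrank_ker
  rw [h1, finrank_matrix'] at h2
  omega

/-- If `A` is a nonzero element of the trace-orthogonal of a hyperplane `H`,
then `H` is exactly the kernel of the associated functional. -/
lemma hyperplane_eq_ker {H : Submodule K (Matrix (Fin n) (Fin n) K)}
    (hH : finrank K H = n ^ 2 - 1) {A : Matrix (Fin n) (Fin n) K}
    (hA : A ∈ traceOrth H) (hA0 : A ≠ 0) :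
    H = LinearMap.ker (tracePairing n K A) :=
  Submodule.eq_of_le_of_finrank_eq (mem_traceOrth_iff.1 hA)
    (by rw [hH, finrank_ker_tracePairing hA0])

/-- Existence of a nonzero element of the trace-orthogonal of a hyperplane. -/
lemma exists_traceOrth_ne_zero {H : Submodule K (Matrix (Fin n) (Fin n) K)}
    (hn : 2 ≤ n) (hH : finrank K H = n ^ 2 - 1) :
    ∃ A : Matrix (Fin n) (Fin n) K, A ∈ traceOrth H ∧ A ≠ 0 := by
  have hq : finrank K (Matrix (Fin n) (Fin n) K ⧸ H) = 1 := by
    have h := Submodule.finrank_quotient_add_finrank H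
    rw [hH, finrank_matrix'] at h
    have h4 : 4 ≤ n ^ 2 := by nlinarith
    omega
  let b : Basis (Fin 1) K (Matrix (Fin n) (Fin n) K ⧸ H) :=
    Module.finBasisOfFinrankEq K _ hq
  let ℓ : Module.Dual K (Matrix (Fin n) (Fin n) K) := (b.coord 0) ∘ₗ H.mkQ
  obtain ⟨A, hA⟩ := tracePairing_surjective (n := n) (K := K) ℓ
  refine ⟨A, ?_, ?_⟩
  · intro M hM
    have hz : ℓ M = 0 := by
      simp [ℓ, (Submodule.Quotient.mk_eq_zero H).2 hM]
    rw [← tracePairing_apply, hA]; exact hz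
  · intro h0
    obtain ⟨x, hx⟩ := Submodule.Quotient.mk_surjective H (b 0)
    have h1 : ℓ x = 1 := by
      simp only [ℓ, LinearMap.comp_apply]
      rw [show H.mkQ x = b 0 from hx]
      simp
    rw [h0, map_zero] at hA
    rw [← hA] at h1
    simp at h1

/-- Any two nonzero elements of the trace-orthogonal of a hyperplane are proportional. -/
lemma traceOrth_smul_eq {H : Submodule K (Matrix (Fin n) (Fin n) K)}
    (hH : finrank K H = n ^ 2 - 1) {A B : Matrix (Fin n) (Fin n) K}
    (hA : A ∈ traceOrth H) (hA0 : A ≠ 0) (hB : B ∈ traceOrth H) (hB0 : B ≠ 0) :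
    ∃ c : K, c ≠ 0 ∧ B = c • A := by
  classical
  have hkA := hyperplane_eq_ker hH hA hA0
  have hkB := hyperplane_eq_ker hH hB hB0
  set f := tracePairing n K A with hf
  set g := tracePairing n K B with hg
  have hker : LinearMap.ker f = LinearMap.ker g := by rw [← hkA, ← hkB]
  obtain ⟨x, hx⟩ : ∃ x, f x ≠ 0 := by
    by_contra hcon
    push_neg at hcon
    exact tracePairing_ne_zero hA0 (LinearMap.ext fun y => hcon y)
  have hprop : g = (g x * (f x)⁻¹) • f := by
    ext y
    have hmem : f x • y - f y • x ∈ LinearMap.ker f := by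
      rw [LinearMap.mem_ker, map_sub, map_smul, map_smul, smul_eq_mul, smul_eq_mul,
        mul_comm, sub_self]
    rw [hker, LinearMap.mem_ker, map_sub, map_smul, map_smul, smul_eq_mul, smul_eq_mul,
      sub_eq_zero] at hmem
    have h2 : f x * g y = f y * g x := hmem
    simp only [LinearMap.smul_apply, smul_eq_mul]
    field_simp
    linear_combination h2
  have heq : tracePairing n K B = tracePairing n K ((g x * (f x)⁻¹) • A) := by
    rw [map_smul]; exact hprop
  have hBA : B = (g x * (f x)⁻¹) • A := tracePairing_injective heq
  refine ⟨g x * (f x)⁻¹, ?_, hBA⟩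
  intro hc
  rw [hc, zero_smul] at hBA
  exact hB0 hBA

lemma rank_smul_eq {c : K} (hc : c ≠ 0) (A : Matrix (Fin n) (Fin n) K) :
    (c • A).rank = A.rank := by
  classical
  have h : c • A = (c • (1 : Matrix (Fin n) (Fin n) K)) * A := by
    rw [smul_mul_assoc, one_mul]
  rw [h]
  apply Matrix.rank_mul_eq_right_of_isUnit_det
  rw [Matrix.det_smul, Matrix.det_one, mul_one]
  exact (IsUnit.mk0 c hc).pow _

lemma rank_unit_mul_right {A P : Matrix (Fin n) (Fin n) K} (hP : IsUnit P) :
    (A * P).rank = A.rank := by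
  classical
  exact Matrix.rank_mul_eq_left_of_isUnit_det P A (hP.map Matrix.detMonoidHom)

lemma rank_unit_mul_left {A P : Matrix (Fin n) (Fin n) K} (hP : IsUnit P) :
    (P * A).rank = A.rank := by
  classical
  exact Matrix.rank_mul_eq_right_of_isUnit_det P A (hP.map Matrix.detMonoidHom)

/-- Forward direction: equivalence implies equality of ranks of orthogonal elements. -/
lemma matEquiv_rank_eq {H₁ H₂ : Submodule K (Matrix (Fin n) (Fin n) K)}
    (hH₁ : finrank K H₁ = n ^ 2 - 1)
    (hE : MatEquiv H₁ H₂) {A B : Matrix (Fin n) (Fin n) K}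
    (hA : A ∈ traceOrth H₁) (hB : B ∈ traceOrth H₂) (hA0 : A ≠ 0) (hB0 : B ≠ 0) :
    A.rank = B.rank := by
  classical
  obtain ⟨P, Q, hP, hQ, him⟩ := hE
  obtain ⟨P', hPP', hP'P⟩ := isUnit_iff_exists.1 hP
  obtain ⟨Q', hQQ', hQ'Q⟩ := isUnit_iff_exists.1 hQ
  have hQBP : Q * B * P ∈ traceOrth H₁ := by
    intro M hM
    have hmem : P * M * Q ∈ (H₂ : Set (Matrix (Fin n) (Fin n) K)) := by
      rw [him]; exact ⟨M, hM, rfl⟩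
    have hz := hB _ hmem
    have e1 : Q * B * P * M = (Q * B) * (P * M) := by noncomm_ring
    have e2 : (P * M) * (Q * B) = (P * M * Q) * B := by noncomm_ring
    rw [e1, Matrix.trace_mul_comm, e2, Matrix.trace_mul_comm]
    exact hz
  have hQBP0 : Q * B * P ≠ 0 := by
    intro h0
    apply hB0
    have e : Q' * (Q * B * P) * P' = B := by
      have e1 : Q' * (Q * B * P) * P' = (Q' * Q) * B * (P * P') := by noncomm_ring
      rw [e1, hQ'Q, hPP', one_mul, mul_one]
    rw [← e, h0, mul_zero, zero_mul]
  obtain ⟨c, hc, hcA⟩ := traceOrth_smul_eq hH₁ hA hA0 hQBP hQBP0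
  have hr : (Q * B * P).rank = B.rank := by
    rw [rank_unit_mul_right hP, rank_unit_mul_left hQ]
  rw [← hr, hcA, rank_smul_eq hc]

/-- Backward direction. -/
lemma matEquiv_of_rank_eq {H₁ H₂ : Submodule K (Matrix (Fin n) (Fin n) K)}
    (hH₁ : finrank K H₁ = n ^ 2 - 1) (hH₂ : finrank K H₂ = n ^ 2 - 1)
    {A B : Matrix (Fin n) (Fin n) K}
    (hA : A ∈ traceOrth H₁) (hA0 : A ≠ 0) (hB : B ∈ traceOrth H₂) (hB0 : B ≠ 0)
    (hrk : A.rank = B.rank) : MatEquiv H₁ H₂ := by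
  classical
  obtain ⟨P, Q, hP, hQ, hBPAQ⟩ := exists_units_of_rank_eq hrk
  obtain ⟨P', hPP', hP'P⟩ := isUnit_iff_exists.1 hP
  obtain ⟨Q', hQQ', hQ'Q⟩ := isUnit_iff_exists.1 hQ
  have hP'u : IsUnit P' := isUnit_iff_exists.2 ⟨P, hP'P, hPP'⟩
  have hQ'u : IsUnit Q' := isUnit_iff_exists.2 ⟨Q, hQ'Q, hQQ'⟩
  refine ⟨Q', P', hQ'u, hP'u, ?_⟩
  have hk₁ := hyperplane_eq_ker hH₁ hA hA0
  have hk₂ := hyperplane_eq_ker hH₂ hB hB0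
  ext M
  simp only [SetLike.mem_coe, Set.mem_image]
  constructor
  · intro hM
    have hM' : (B * M).trace = 0 := by
      rw [hk₂] at hM; exact hM
    refine ⟨Q * M * P, ?_, ?_⟩
    · rw [hk₁, LinearMap.mem_ker, tracePairing_apply]
      rw [hBPAQ] at hM'
      have e1 : A * (Q * M * P) = (A * Q * M) * P := by noncomm_ring
      have e2 : P * (A * Q * M) = P * A * Q * M := by noncomm_ring
      rw [e1, Matrix.trace_mul_comm, e2]
      exact hM'
    · have e : Q' * (Q * M * P) * P' = (Q' * Q) * M * (P * P') := by noncomm_ring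
      rw [e, hQ'Q, hPP', one_mul, mul_one]
  · rintro ⟨N, hN, rfl⟩
    rw [hk₂, LinearMap.mem_ker, tracePairing_apply, hBPAQ]
    rw [hk₁, LinearMap.mem_ker, tracePairing_apply] at hN
    have e1 : P * A * Q * (Q' * N * P') = (P * A * ((Q * Q') * N)) * P' := by noncomm_ring
    have e2 : P' * (P * A * ((Q * Q') * N)) = (P' * P) * A * ((Q * Q') * N) := by noncomm_ring
    rw [e1, Matrix.trace_mul_comm, e2, hQQ', hP'P, one_mul, one_mul]
    exact hN

lemma rank_eq_zero_iff' {A : Matrix (Fin n) (Fin n) K} : A.rank = 0 ↔ A = 0 := by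
  constructor
  · intro h0
    have hb : LinearMap.range A.mulVecLin = ⊥ := Submodule.finrank_eq_zero.1 h0
    have hm : A.mulVecLin = 0 := LinearMap.range_eq_bot.1 hb
    have := mulVecLin_toMatrix' (K := K) (n := n) A
    rw [hm, map_zero] at this
    exact this.symm
  · rintro rfl
    exact Matrix.rank_zero


lemma exists_rank_matrix (k : Fin n) :
    ∃ A : Matrix (Fin n) (Fin n) K, A ≠ 0 ∧ A.rank = k.val + 1 := by
  classical
  have hn0 : 0 < n := k.pos
  refine ⟨Matrix.diagonal (fun i => if i.val ≤ k.val then (1:K) else 0), ?_, ?_⟩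
  · intro h0
    have h1 : (Matrix.diagonal (fun i => if i.val ≤ k.val then (1:K) else 0) :
        Matrix (Fin n) (Fin n) K) ⟨0, hn0⟩ ⟨0, hn0⟩ = 1 := by
      rw [Matrix.diagonal_apply_eq]
      exact if_pos (Nat.zero_le _)
    rw [h0] at h1
    simp at h1
  · rw [Matrix.rank_diagonal, Fintype.card_subtype]
    have : Finset.filter (fun i : Fin n => (if i.val ≤ k.val then (1:K) else 0) ≠ 0)
        Finset.univ = Finset.Iic k := by
      ext i
      simp only [Finset.mem_filter, Finset.mem_univ, true_and, Finset.mem_Iic, ne_eq]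
      by_cases h : (i : ℕ) ≤ (k : ℕ)
      · rw [if_pos h]
        simp only [one_ne_zero, not_false_iff, true_iff]
        exact h
      · rw [if_neg h]
        simp only [not_true, false_iff]
        intro hik
        exact h hik
    rw [this, Fin.card_Iic]

end Aux

theorem stmt_5 {K : Type*} [Field K] {n : ℕ} (hn : 2 ≤ n) :
    (∀ H₁ H₂ : Submodule K (Matrix (Fin n) (Fin n) K),
      Module.finrank K H₁ = n ^ 2 - 1 → Module.finrank K H₂ = n ^ 2 - 1 →
      (MatEquiv H₁ H₂ ↔
        ∀ A B : Matrix (Fin n) (Fin n) K, A ∈ traceOrth H₁ → B ∈ traceOrth H₂ →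
          A ≠ 0 → B ≠ 0 → A.rank = B.rank)) ∧
    Nat.card (Quot (fun H₁ H₂ :
        {H : Submodule K (Matrix (Fin n) (Fin n) K) // Module.finrank K H = n ^ 2 - 1} =>
        MatEquiv H₁.1 H₂.1)) = n := by
  classical
  have main : ∀ H₁ H₂ : Submodule K (Matrix (Fin n) (Fin n) K),
      Module.finrank K H₁ = n ^ 2 - 1 → Module.finrank K H₂ = n ^ 2 - 1 →
      (MatEquiv H₁ H₂ ↔
        ∀ A B : Matrix (Fin n) (Fin n) K, A ∈ traceOrth H₁ → B ∈ traceOrth H₂ →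
          A ≠ 0 → B ≠ 0 → A.rank = B.rank) := by
    intro H₁ H₂ hH₁ hH₂
    constructor
    · intro hE A B hA hB hA0 hB0
      exact matEquiv_rank_eq hH₁ hE hA hB hA0 hB0
    · intro hrk
      obtain ⟨A, hA, hA0⟩ := exists_traceOrth_ne_zero hn hH₁
      obtain ⟨B, hB, hB0⟩ := exists_traceOrth_ne_zero hn hH₂
      exact matEquiv_of_rank_eq hH₁ hH₂ hA hA0 hB hB0 (hrk A B hA hB hA0 hB0)
  refine ⟨main, ?_⟩
  -- counting the equivalence classes
  set S := {H : Submodule K (Matrix (Fin n) (Fin n) K) // Module.finrank K H = n ^ 2 - 1}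
    with hS
  -- the chosen orthogonal matrix of a hyperplane
  let orth : S → Matrix (Fin n) (Fin n) K :=
    fun H => (exists_traceOrth_ne_zero hn H.2).choose
  have orth_mem : ∀ H : S, orth H ∈ traceOrth H.1 :=
    fun H => (exists_traceOrth_ne_zero hn H.2).choose_spec.1
  have orth_ne : ∀ H : S, orth H ≠ 0 :=
    fun H => (exists_traceOrth_ne_zero hn H.2).choose_spec.2
  have orth_rank_pos : ∀ H : S, 1 ≤ (orth H).rank := by
    intro H
    rw [Nat.one_le_iff_ne_zero]
    intro h0
    exact orth_ne H (rank_eq_zero_iff'.1 h0)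
  have orth_rank_le : ∀ H : S, (orth H).rank ≤ n := by
    intro H
    have := Matrix.rank_le_card_width (orth H)
    simpa using this
  -- the invariant
  let F : Quot (fun H₁ H₂ : S => MatEquiv H₁.1 H₂.1) → Fin n :=
    Quot.lift (fun H => ⟨(orth H).rank - 1, by
      have := orth_rank_pos H; have := orth_rank_le H; omega⟩)
      (by
        intro H₁ H₂ hE
        have := matEquiv_rank_eq H₁.2 hE (orth_mem H₁) (orth_mem H₂) (orth_ne H₁) (orth_ne H₂)
        simp only [this])
  have hFbij : Function.Bijective F := by
    constructor
    · intro x y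
      induction x using Quot.ind with | _ H₁ =>
      induction y using Quot.ind with | _ H₂ =>
      intro hxy
      have hr : (orth H₁).rank = (orth H₂).rank := by
        have h1 := orth_rank_pos H₁
        have h2 := orth_rank_pos H₂
        have := Fin.mk.injEq ((orth H₁).rank - 1) _ ((orth H₂).rank - 1) _ ▸ hxy
        simp only [F, Quot.lift_mk] at hxy
        have := Fin.val_eq_val _ _ |>.2 hxy
        simp only [Fin.val_mk] at this
        omega
      exact Quot.sound (matEquiv_of_rank_eq H₁.2 H₂.2 (orth_mem H₁) (orth_ne H₁)
        (orth_mem H₂) (orth_ne H₂) hr)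
    · intro k
      -- construct a hyperplane whose orthogonal matrix has rank k+1
      obtain ⟨A, hA0, hArank⟩ := exists_rank_matrix (K := K) k
      let H : Submodule K (Matrix (Fin n) (Fin n) K) := LinearMap.ker (tracePairing n K A)
      have hH : Module.finrank K H = n ^ 2 - 1 := finrank_ker_tracePairing hA0
      have hAorth : A ∈ traceOrth H := by
        intro M hM
        exact hM
      refine ⟨Quot.mk _ ⟨H, hH⟩, ?_⟩
      have hrk : (orth ⟨H, hH⟩).rank = A.rank := by
        obtain ⟨c, hc, hcA⟩ := traceOrth_smul_eq hH hAorth hA0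
          (orth_mem ⟨H, hH⟩) (orth_ne ⟨H, hH⟩)
        rw [hcA, rank_smul_eq hc]
      show Fin.mk ((orth ⟨H, hH⟩).rank - 1) _ = k
      apply Fin.ext
      simp only [Fin.val_mk]
      rw [hrk, hArank]
      omega
  calc Nat.card (Quot (fun H₁ H₂ : S => MatEquiv H₁.1 H₂.1))
      = Nat.card (Fin n) := Nat.card_eq_of_bijective F hFbij
    _ = n := by simp
end

section
/- There are exactly 56 matrices in M_3(F_2) whose characteristic polynomial is t³ + 1. -/
open Polynomial Matrix

lemma coeffs_iff (a b c : ZMod 2) :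
    X ^ 3 + C a * X ^ 2 + C b * X + C c = X ^ 3 + 1 ↔ a = 0 ∧ b = 0 ∧ c = 1 := by
  constructor
  · intro h
    refine ⟨?_, ?_, ?_⟩
    · have := congrArg (fun p => Polynomial.coeff p 2) h
      simpa [coeff_one] using this
    · have := congrArg (fun p => Polynomial.coeff p 1) h
      simpa [coeff_one] using this
    · have := congrArg (fun p => Polynomial.coeff p 0) h
      simpa [coeff_one] using this
  · rintro ⟨rfl, rfl, rfl⟩
    simp

lemma charpoly_eq' (M : Matrix (Fin 3) (Fin 3) (ZMod 2)) :
    M.charpoly = X ^ 3 + C (-(M 0 0 + M 1 1 + M 2 2)) * X ^ 2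
      + C (M 0 0 * M 1 1 - M 0 1 * M 1 0 + M 0 0 * M 2 2 - M 0 2 * M 2 0
          + M 1 1 * M 2 2 - M 1 2 * M 2 1) * X
      + C (-(M 0 0 * (M 1 1 * M 2 2 - M 1 2 * M 2 1)
          - M 0 1 * (M 1 0 * M 2 2 - M 1 2 * M 2 0)
          + M 0 2 * (M 1 0 * M 2 1 - M 1 1 * M 2 0))) := by
  rw [Matrix.charpoly, Matrix.det_fin_three]
  simp [charmatrix_apply_eq, charmatrix_apply_ne, Matrix.charmatrix, CharTwo.neg_eq, CharTwo.sub_eq_add]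
  ring

open Polynomial in
theorem stmt_8 :
    Nat.card {M : Matrix (Fin 3) (Fin 3) (ZMod 2) |
      M.charpoly = X ^ 3 + 1} = 56 := by
  have h : ∀ M : Matrix (Fin 3) (Fin 3) (ZMod 2), M.charpoly = X ^ 3 + 1 ↔
      (-(M 0 0 + M 1 1 + M 2 2) = 0 ∧
       (M 0 0 * M 1 1 - M 0 1 * M 1 0 + M 0 0 * M 2 2 - M 0 2 * M 2 0
          + M 1 1 * M 2 2 - M 1 2 * M 2 1) = 0 ∧
       (-(M 0 0 * (M 1 1 * M 2 2 - M 1 2 * M 2 1)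
          - M 0 1 * (M 1 0 * M 2 2 - M 1 2 * M 2 0)
          + M 0 2 * (M 1 0 * M 2 1 - M 1 1 * M 2 0))) = 1) := by
    intro M
    rw [charpoly_eq']
    exact coeffs_iff _ _ _
  rw [Set.ext h, Nat.card_eq_fintype_card, Fintype.card_subtype]
  decide
end

section
/- Let J_3(F_2) ⊆ M_3(F_2) be the space of lower triangular 3×3 matrices over F_2 with trace zero. Then J_3(F_2) is a 5-dimensional linear subspace all of whose elements are singular, and it contains exactly 5 matrices of rank 1. -/
set_option maxRecDepth 4000

/-- The space of lower triangular trace-zero `3 × 3` matrices over `F₂`. -/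
def J3 : Submodule (ZMod 2) (Matrix (Fin 3) (Fin 3) (ZMod 2)) where
  carrier := {M | M 0 1 = 0 ∧ M 0 2 = 0 ∧ M 1 2 = 0 ∧ M.trace = 0}
  add_mem' := by
    rintro a b ⟨h1, h2, h3, h4⟩ ⟨g1, g2, g3, g4⟩
    refine ⟨?_, ?_, ?_, ?_⟩ <;>
      simp [Matrix.add_apply, h1, h2, h3, g1, g2, g3, h4, g4]
  zero_mem' := by simp
  smul_mem' := by
    rintro c a ⟨h1, h2, h3, h4⟩
    refine ⟨?_, ?_, ?_, ?_⟩ <;> simp [Matrix.smul_apply, h1, h2, h3, h4]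

lemma card_pow_finrank (V : Type*) [AddCommGroup V] [Module (ZMod 2) V] [Finite V] :
    Nat.card V = 2 ^ Module.finrank (ZMod 2) V := by
  have : Fintype V := Fintype.ofFinite V
  rw [Nat.card_eq_fintype_card, Module.card_eq_pow_finrank (K := ZMod 2), ZMod.card]

lemma rank_iff_card (A : Matrix (Fin 3) (Fin 3) (ZMod 2)) :
    A.rank = 1 ↔ Fintype.card (Set.range A.mulVec) = 2 := by
  have h0 : Set.range (⇑A.mulVecLin) = Set.range A.mulVec := by
    rfl
  have h1 : Nat.card (LinearMap.range A.mulVecLin) = 2 ^ A.rank :=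
    card_pow_finrank _
  have h2 : Nat.card (LinearMap.range A.mulVecLin) = Fintype.card (Set.range A.mulVec) := by
    rw [← Nat.card_eq_fintype_card]
    exact Nat.card_congr (Equiv.setCongr ((LinearMap.coe_range _).trans h0))
  rw [← h2, h1]
  constructor
  · rintro h; rw [h]; rfl
  · intro h
    have : (2 : ℕ) ^ A.rank = 2 ^ 1 := h
    exact Nat.pow_right_injective le_rfl this

theorem stmt_11 :
    Module.finrank (ZMod 2) J3 = 5 ∧
    (∀ M ∈ J3, ¬ IsUnit M) ∧
    Nat.card {M : Matrix (Fin 3) (Fin 3) (ZMod 2) | M ∈ J3 ∧ M.rank = 1} = 5 := by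
  refine ⟨?_, ?_, ?_⟩
  · have hc : Nat.card J3 = 32 := by
      have : Nat.card J3 = Nat.card {M : Matrix (Fin 3) (Fin 3) (ZMod 2) //
          M 0 1 = 0 ∧ M 0 2 = 0 ∧ M 1 2 = 0 ∧ M.trace = 0} :=
        Nat.card_congr (Equiv.subtypeEquivRight fun M => Iff.rfl)
      rw [this, Nat.card_eq_fintype_card]
      decide
    have := card_pow_finrank J3
    rw [hc] at this
    have h32 : (2:ℕ) ^ Module.finrank (ZMod 2) J3 = 2 ^ 5 := this.symm
    exact Nat.pow_right_injective le_rfl h32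
  · rintro M ⟨h1, h2, h3, h4⟩
    rw [Matrix.isUnit_iff_isUnit_det]
    have htr : M 2 2 = M 0 0 + M 1 1 := by
      rw [Matrix.trace_fin_three] at h4
      have : ∀ x y z : ZMod 2, x + y + z = 0 → z = x + y := by decide
      exact this _ _ _ h4
    have hdet : M.det = 0 := by
      rw [Matrix.det_fin_three, h1, h2, h3, htr]
      have : ∀ a b : ZMod 2, a * b * (a + b) = 0 := by decide
      simpa using this (M 0 0) (M 1 1)
    rw [hdet]
    exact not_isUnit_zero
  · have hset : {M : Matrix (Fin 3) (Fin 3) (ZMod 2) | M ∈ J3 ∧ M.rank = 1} =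
        {M : Matrix (Fin 3) (Fin 3) (ZMod 2) |
          (M 0 1 = 0 ∧ M 0 2 = 0 ∧ M 1 2 = 0 ∧ M.trace = 0) ∧
          Fintype.card (Set.range M.mulVec) = 2} := by
      ext M
      exact and_congr Iff.rfl (rank_iff_card M)
    rw [hset, Nat.card_eq_fintype_card]
    decide
end

section
/- Let K be a field, n ≥ 1, and suppose P, Q ∈ GL_n(K) are such that P M Q ∈ sl_n(K) for every M ∈ sl_n(K) (i.e. tr(PMQ) = 0 whenever tr M = 0). Then QP is a scalar multiple of the identity matrix. -/
open Matrix

theorem stmt_16 {K : Type*} [Field K] {n : ℕ} (hn : 1 ≤ n)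
    (P Q : Matrix (Fin n) (Fin n) K) (hP : IsUnit P) (hQ : IsUnit Q)
    (h : ∀ M : Matrix (Fin n) (Fin n) K, M.trace = 0 → (P * M * Q).trace = 0) :
    ∃ c : K, Q * P = c • (1 : Matrix (Fin n) (Fin n) K) := by
  set A := Q * P with hA
  have key : ∀ M : Matrix (Fin n) (Fin n) K, M.trace = 0 → (A * M).trace = 0 := by
    intro M hM
    have := h M hM
    rwa [Matrix.trace_mul_cycle] at this
  have htr : ∀ i j : Fin n, (A * single i j 1).trace = A j i := by
    intro i j
    rw [Matrix.trace]
    simp only [Matrix.diag, Matrix.mul_apply, Matrix.single, Matrix.of_apply,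
      mul_ite, mul_one, mul_zero]
    rw [Finset.sum_comm]
    simp [ite_and, Finset.sum_ite_eq, Finset.sum_ite_eq', eq_comm]
  have hoff : ∀ i j : Fin n, i ≠ j → A j i = 0 := by
    intro i j hij
    rw [← htr i j]
    exact key _ (Matrix.trace_single_eq_of_ne _ _ _ hij)
  have hdiag : ∀ i j : Fin n, A i i = A j j := by
    intro i j
    by_cases hij : i = j
    · rw [hij]
    · have h0 := key (single i i 1 - single j j 1) (by
        simp [Matrix.trace_sub, Matrix.trace_single_eq_same])
      rw [Matrix.mul_sub, Matrix.trace_sub, htr, htr, sub_eq_zero] at h0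
      exact h0
  obtain ⟨i0⟩ : Nonempty (Fin n) := ⟨⟨0, hn⟩⟩
  refine ⟨A i0 i0, ?_⟩
  ext i j
  by_cases hij : i = j
  · subst hij
    simp [hdiag i i0]
  · simp [Matrix.one_apply_ne hij, hoff j i (Ne.symm hij), hij]
end

section
/- Define Φ : H_n → H_n on the subspace H_n ⊆ M_n(K) of matrices of the form [[M, C],[0, a]] (with M ∈ M_{n−1}(K), C a column, a ∈ K, n ≥ 3) by Φ([[M, C],[0, a]]) = [[M, C + m_{2,2}·e₁],[0, a]], where m_{2,2} is the (2,2) entry of M and e₁ is the first standard basis column vector. Then Φ is a linear bijection of H_n satisfying: for all X ∈ H_n, Φ(X) is invertible if and only if X is invertible; but Φ is not a rank preserver (there exists X ∈ H_n with rank X = 1 and rank Φ(X) = 2). -/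
/-- The subspace `H_n` of `(m+1) × (m+1)` matrices of block form `[[M, C],[0, a]]`,
i.e. whose last row vanishes except possibly at the last entry. -/
def Hn (K : Type*) [Field K] (m : ℕ) : Submodule K (Matrix (Fin (m + 1)) (Fin (m + 1)) K) where
  carrier := {X | ∀ j : Fin m, X (Fin.last m) j.castSucc = 0}
  add_mem' := by
    intro a b ha hb j
    simp [Matrix.add_apply, ha j, hb j]
  zero_mem' := by simp
  smul_mem' := by
    intro c a ha j
    simp [Matrix.smul_apply, ha j]

/-- The map `Φ` adding the `(2,2)` entry of the upper-left block to the first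
entry of the last column. -/
def Phi {K : Type*} [Field K] (m : ℕ) (X : Matrix (Fin (m + 1)) (Fin (m + 1)) K) :
    Matrix (Fin (m + 1)) (Fin (m + 1)) K :=
  X + Matrix.single 0 (Fin.last m) (X 1 1)

section aux
variable {K : Type*} [Field K] {m : ℕ}

lemma aux_ne {m : ℕ} (hm : 2 ≤ m) :
    (0 : Fin (m+1)) ≠ 1 ∧ Fin.last m ≠ 0 ∧ Fin.last m ≠ 1 := by
  have h1 : (1 : Fin (m+1)).val = 1 := by
    rw [Fin.val_one', Nat.mod_eq_of_lt (by omega)]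
  refine ⟨?_, ?_, ?_⟩ <;>
    · simp only [Ne, Fin.ext_iff, Fin.val_last, Fin.val_zero, h1]
      omega

lemma std_mul_std {K : Type*} [Field K] {p q r : Type*} [DecidableEq p] [DecidableEq q]
    [DecidableEq r] [Fintype q] (i : p) (j j' : q) (k : r) (c d : K) :
    Matrix.single i j c * Matrix.single j' k d =
      if j = j' then Matrix.single i k (c * d) else 0 := by
  ext a b
  simp only [Matrix.mul_apply, Matrix.single, Matrix.of_apply, ite_and, mul_ite, ite_mul,
    zero_mul, mul_zero, Finset.sum_ite_eq, Finset.mem_univ, if_true]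
  by_cases hia : i = a <;> by_cases hkb : k = b <;> by_cases hjj : j = j' <;>
    simp_all [eq_comm]

lemma det_phi (hm : 2 ≤ m) (X : Matrix (Fin (m + 1)) (Fin (m + 1)) K)
    (hX : X ∈ Hn K m) : (Phi m X).det = X.det := by
  obtain ⟨h01, hL0, hL1⟩ := aux_ne hm
  have h1 : Phi m X = X.updateCol (Fin.last m)
      ((fun i => X i (Fin.last m)) + Pi.single 0 (X 1 1)) := by
    ext i j
    by_cases h : j = Fin.last m <;>
      simp [Phi, Matrix.updateCol_apply, Matrix.single, h, Pi.single_apply, eq_comm]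
  rw [h1, Matrix.det_updateCol_add, Matrix.updateCol_eq_self]
  have h2 : (X.updateCol (Fin.last m) (Pi.single 0 (X 1 1))).det = 0 := by
    apply Matrix.det_eq_zero_of_row_eq_zero (Fin.last m)
    intro j
    rcases eq_or_ne j (Fin.last m) with rfl | hj
    · simp [Matrix.updateCol_apply, Pi.single_apply, hL0]
    · obtain ⟨j', rfl⟩ := Fin.exists_castSucc_eq.mpr hj
      simp [Matrix.updateCol_apply, hj, hX j']
  rw [h2, add_zero]

end aux

theorem stmt_19 {K : Type*} [Field K] (m : ℕ) (hm : 2 ≤ m) :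
    IsLinearMap K (Phi (K := K) m) ∧
    (∀ X ∈ Hn K m, Phi m X ∈ Hn K m) ∧
    Set.BijOn (Phi m) (Hn K m : Set (Matrix (Fin (m + 1)) (Fin (m + 1)) K))
      (Hn K m : Set (Matrix (Fin (m + 1)) (Fin (m + 1)) K)) ∧
    (∀ X ∈ Hn K m, (IsUnit (Phi m X) ↔ IsUnit X)) ∧
    (∃ X ∈ Hn K m, X.rank = 1 ∧ (Phi m X).rank = 2) := by
  obtain ⟨h01, hL0, hL1⟩ := aux_ne hm
  have hlin : IsLinearMap K (Phi (K := K) m) := by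
    constructor
    · intro X Y
      simp only [Phi, Matrix.add_apply, Matrix.single_add]
      abel
    · intro c X
      ext i j
      simp only [Phi, Matrix.smul_apply, Matrix.add_apply, Matrix.single, Matrix.of_apply]
      split <;> simp only [smul_eq_mul] <;> ring
  have hmaps : ∀ X ∈ Hn K m, Phi m X ∈ Hn K m := by
    intro X hX j
    have := hX j
    have hne : Fin.last m ≠ (0 : Fin (m+1)) := hL0
    simp [Phi, Matrix.single, hne, this,
      (Fin.castSucc_lt_last j).ne]
    omega
  have phi11 : ∀ X : Matrix (Fin (m+1)) (Fin (m+1)) K, (Phi m X) 1 1 = X 1 1 := by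
    intro X
    simp [Phi, Matrix.single, h01]
  set Psi : Matrix (Fin (m+1)) (Fin (m+1)) K → Matrix (Fin (m+1)) (Fin (m+1)) K :=
    fun X => X - Matrix.single 0 (Fin.last m) (X 1 1) with hPsidef
  have psi11 : ∀ X : Matrix (Fin (m+1)) (Fin (m+1)) K, (Psi X) 1 1 = X 1 1 := by
    intro X
    simp [hPsidef, Matrix.single, h01]
  have hPsimaps : ∀ X ∈ Hn K m, Psi X ∈ Hn K m := by
    intro X hX j
    have hne : Fin.last m ≠ (0 : Fin (m+1)) := hL0
    have := hX j
    simp [hPsidef, Matrix.single, hne, this, (Fin.castSucc_lt_last j).ne]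
    omega
  have hleft : ∀ X, Psi (Phi m X) = X := by
    intro X
    have h : ((X + Matrix.single 0 (Fin.last m) (X 1 1) : Matrix (Fin (m+1)) (Fin (m+1)) K)) 1 1 = X 1 1 := by
      simp [Matrix.single, h01]
    simp only [hPsidef, Phi, h]
    abel
  have hright : ∀ X, Phi m (Psi X) = X := by
    intro X
    have h : ((X - Matrix.single 0 (Fin.last m) (X 1 1) : Matrix (Fin (m+1)) (Fin (m+1)) K)) 1 1 = X 1 1 := by
      simp [Matrix.single, h01]
    simp only [hPsidef, Phi, h]
    abel
  have hbij : Set.BijOn (Phi m) (Hn K m : Set (Matrix (Fin (m + 1)) (Fin (m + 1)) K))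
      (Hn K m : Set (Matrix (Fin (m + 1)) (Fin (m + 1)) K)) := by
    refine Set.InvOn.bijOn ⟨fun X _ => hleft X, fun X _ => hright X⟩
      (fun X hX => hmaps X hX) (fun X hX => hPsimaps X hX)
  have hunit : ∀ X ∈ Hn K m, IsUnit (Phi m X) ↔ IsUnit X := by
    intro X hX
    rw [Matrix.isUnit_iff_isUnit_det, Matrix.isUnit_iff_isUnit_det, det_phi hm X hX]
  -- rank counterexample
  have hone1 : (1 : Matrix (Fin 1) (Fin 1) K) = Matrix.single 0 0 1 := by
    ext a b
    fin_cases a <;> fin_cases b <;> simp [Matrix.one_apply, Matrix.single]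
  have hone2 : (1 : Matrix (Fin 2) (Fin 2) K) =
      Matrix.single 0 0 1 + Matrix.single 1 1 1 := by
    ext a b
    fin_cases a <;> fin_cases b <;> simp [Matrix.one_apply, Matrix.single]
  have hstd_rank_le : ∀ (i j : Fin (m+1)) (c : K), (Matrix.single i j c).rank ≤ 1 := by
    intro i j c
    have hd : Matrix.single i j c =
        Matrix.single i (0 : Fin 1) c * Matrix.single (0 : Fin 1) j (1 : K) := by
      rw [std_mul_std, if_pos rfl, mul_one]
    calc (Matrix.single i j c).rank
        = (Matrix.single i (0 : Fin 1) c * Matrix.single (0 : Fin 1) j (1 : K)).rank := by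
          rw [← hd]
      _ ≤ (Matrix.single i (0 : Fin 1) c).rank := Matrix.rank_mul_le_left _ _
      _ ≤ Fintype.card (Fin 1) := Matrix.rank_le_card_width _
      _ = 1 := by simp
  have hrk_add : ∀ A B : Matrix (Fin (m+1)) (Fin (m+1)) K,
      (A + B).rank ≤ A.rank + B.rank := by
    intro A B
    rw [Matrix.rank, Matrix.rank, Matrix.rank, Matrix.mulVecLin_add]
    refine le_trans (Submodule.finrank_mono ?_)
      (Submodule.finrank_add_le_finrank_add_finrank _ _)
    rintro x ⟨v, rfl⟩
    exact Submodule.mem_sup.mpr ⟨_, ⟨v, rfl⟩, _, ⟨v, rfl⟩, rfl⟩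
  set X₀ : Matrix (Fin (m+1)) (Fin (m+1)) K := Matrix.single 1 1 1 with hX₀def
  have hX₀mem : X₀ ∈ Hn K m := by
    intro j
    simp [hX₀def, Matrix.single, hL1.symm]
  have hPhiX₀ : Phi m X₀ =
      Matrix.single 1 1 (1:K) + Matrix.single 0 (Fin.last m) 1 := by
    simp only [Phi, hX₀def, Matrix.single_apply_same]
  have hrank1 : X₀.rank = 1 := by
    apply le_antisymm
    · exact hX₀def ▸ hstd_rank_le 1 1 1
    · have key : Matrix.single (0 : Fin 1) (1 : Fin (m+1)) (1:K) *
          (X₀ * Matrix.single (1 : Fin (m+1)) (0 : Fin 1) (1:K)) = 1 := by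
        rw [hX₀def, std_mul_std, if_pos rfl, std_mul_std, if_pos rfl, mul_one, mul_one, hone1]
      calc 1 = (Matrix.single (0 : Fin 1) (1 : Fin (m+1)) (1:K) *
            (X₀ * Matrix.single (1 : Fin (m+1)) (0 : Fin 1) (1:K))).rank := by
            rw [key, Matrix.rank_one]; simp
        _ ≤ (X₀ * Matrix.single (1 : Fin (m+1)) (0 : Fin 1) (1:K)).rank :=
            Matrix.rank_mul_le_right _ _
        _ ≤ X₀.rank := Matrix.rank_mul_le_left _ _
  have hrank2 : (Phi m X₀).rank = 2 := by
    apply le_antisymm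
    · calc (Phi m X₀).rank
          ≤ (Matrix.single 1 1 (1:K)).rank +
            (Matrix.single (0 : Fin (m+1)) (Fin.last m) (1:K)).rank := by
            rw [hPhiX₀]; exact hrk_add _ _
        _ ≤ 1 + 1 := add_le_add (hstd_rank_le _ _ _) (hstd_rank_le _ _ _)
        _ = 2 := rfl
    · set L2 : Matrix (Fin 2) (Fin (m+1)) K :=
        Matrix.single 0 1 1 + Matrix.single 1 0 1 with hL2
      set R2 : Matrix (Fin (m+1)) (Fin 2) K :=
        Matrix.single 1 0 1 + Matrix.single (Fin.last m) 1 1 with hR2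
      have key : L2 * (Phi m X₀ * R2) = 1 := by
        have e0 : (0:Fin 2) ≠ 1 := by decide
        rw [hPhiX₀, hL2, hR2, hone2]
        simp only [Matrix.mul_add, Matrix.add_mul, std_mul_std, hL1, hL1.symm, h01, h01.symm,
          e0, e0.symm, if_true, if_false, eq_self_iff_true, mul_one, ite_true, ite_false,
          Matrix.mul_zero, Matrix.zero_mul, add_zero, zero_add, Ne, not_false_iff]
      calc 2 = (L2 * (Phi m X₀ * R2)).rank := by rw [key, Matrix.rank_one]; simp
        _ ≤ (Phi m X₀ * R2).rank := Matrix.rank_mul_le_right _ _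
        _ ≤ (Phi m X₀).rank := Matrix.rank_mul_le_left _ _
  exact ⟨hlin, hmaps, hbij, hunit, ⟨X₀, hX₀mem, hrank1, hrank2⟩⟩
end
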